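/- The set Γ(C ↻ H) of H-equivariant cocharacters forms a group under the convolution product, with inverse of φ given by φ^{⋆−1}(c) = S(φ(c^{(0)})) c^{(1)}. -/

import Mathlib

open TensorProduct LinearMap Coalgebra

/-- A coflat Hopf coaction of a Hopf algebra `H` on a coalgebra `C`. -/
structure IsCoflatCoaction (R C H : Type) [CommRing R]
    [AddCommGroup C] [Module R C] [Coalgebra R C]
    [Ring H] [HopfAlgebra R H]
    (δ : C →ₗ[R] C ⊗[R] H) : Prop where
  coassoc : (TensorProduct.assoc R C H H).toLinearMap ∘ₗ
      (TensorProduct.map δ (LinearMap.id : H →ₗ[R] H)) ∘ₗ δ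
      = (TensorProduct.map (LinearMap.id : C →ₗ[R] C) (Coalgebra.comul (R := R))) ∘ₗ δ
  counitary : (TensorProduct.rid R C).toLinearMap ∘ₗ
      (TensorProduct.map (LinearMap.id : C →ₗ[R] C) (Coalgebra.counit (R := R))) ∘ₗ δ
      = LinearMap.id
  coflat_mul : (TensorProduct.map (LinearMap.id : (C ⊗[R] C) →ₗ[R] C ⊗[R] C)
        (LinearMap.mul' R H)) ∘ₗ
      (TensorProduct.tensorTensorTensorComm R C H C H).toLinearMap ∘ₗ
      (TensorProduct.map δ δ) ∘ₗ Coalgebra.comul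
      = (TensorProduct.map (Coalgebra.comul (R := R)) (LinearMap.id : H →ₗ[R] H)) ∘ₗ δ
  coflat_counit : (LinearMap.mul' R R) ∘ₗ
      (TensorProduct.map (Coalgebra.counit (R := R)) (Coalgebra.counit (R := R))) ∘ₗ δ
      = Coalgebra.counit

section Cocharacters

variable (R C H : Type) [CommRing R] [AddCommGroup C] [Module R C] [Coalgebra R C]
  [Ring H] [HopfAlgebra R H]

/-- The convolution product on `Hom(C,H)`: `(φ ⋆ ψ)(c) = φ(c₍₁₎) ψ(c₍₂₎)`. -/
noncomputable def conv (φ ψ : C →ₗ[R] H) : C →ₗ[R] H :=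
  (LinearMap.mul' R H) ∘ₗ (TensorProduct.map φ ψ) ∘ₗ Coalgebra.comul

/-- The convolution unit `c ↦ ε(c) 1`. -/
noncomputable def convOne : C →ₗ[R] H :=
  (Algebra.linearMap R H) ∘ₗ Coalgebra.counit

variable (δ : C →ₗ[R] C ⊗[R] H)

/-- `c ↦ φ(c₍₁₎⁽⁰⁾) ⊗ c₍₁₎⁽¹⁾ ψ(c₍₂₎)` as a linear map `C → H ⊗ H`. -/
noncomputable def coactTerm (φ ψ : C →ₗ[R] H) : C →ₗ[R] H ⊗[R] H :=
  (TensorProduct.map (LinearMap.id : H →ₗ[R] H) (LinearMap.mul' R H)) ∘ₗ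
    (TensorProduct.assoc R H H H).toLinearMap ∘ₗ
    (TensorProduct.map (TensorProduct.map φ (LinearMap.id : H →ₗ[R] H)) ψ) ∘ₗ
    (TensorProduct.map δ (LinearMap.id : C →ₗ[R] C)) ∘ₗ Coalgebra.comul

/-- `c ↦ c₍₁₎⁽⁰⁾ ⊗ c₍₁₎⁽¹⁾ φ(c₍₂₎)` as a linear map `C → C ⊗ H`. -/
noncomputable def comodCondLHS (φ : C →ₗ[R] H) : C →ₗ[R] C ⊗[R] H :=
  (TensorProduct.map (LinearMap.id : C →ₗ[R] C) (LinearMap.mul' R H)) ∘ₗ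
    (TensorProduct.assoc R C H H).toLinearMap ∘ₗ
    (TensorProduct.map δ φ) ∘ₗ Coalgebra.comul

/-- `c ↦ c₍₂₎⁽⁰⁾ ⊗ φ(c₍₁₎) c₍₂₎⁽¹⁾` as a linear map `C → C ⊗ H`. -/
noncomputable def comodCondRHS (φ : C →ₗ[R] H) : C →ₗ[R] C ⊗[R] H :=
  (TensorProduct.map (LinearMap.id : C →ₗ[R] C) (LinearMap.mul' R H)) ∘ₗ
    (TensorProduct.assoc R C H H).toLinearMap ∘ₗ
    (TensorProduct.map ((TensorProduct.comm R H C).toLinearMap)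
      (LinearMap.id : H →ₗ[R] H)) ∘ₗ
    (TensorProduct.assoc R H C H).symm.toLinearMap ∘ₗ
    (TensorProduct.map φ δ) ∘ₗ Coalgebra.comul

/-- An `H`-equivariant cocharacter: convolution invertible, counitary, satisfying the
coaction condition and the comodule condition. -/
structure IsCocharacter (φ : C →ₗ[R] H) : Prop where
  invertible : ∃ ψ : C →ₗ[R] H, conv R C H φ ψ = convOne R C H ∧ conv R C H ψ φ = convOne R C H
  counitary : (Coalgebra.counit (R := R)) ∘ₗ φ = Coalgebra.counit
  coaction : (Coalgebra.comul (R := R)) ∘ₗ φ = coactTerm R C H δ φ φ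
  comodule : comodCondLHS R C H δ φ = comodCondRHS R C H δ φ

end Cocharacters

section ConvGen
variable {R C : Type} [CommRing R] [AddCommGroup C] [Module R C] [Coalgebra R C]
variable {A B : Type} [Ring A] [Algebra R A] [Ring B] [Algebra R B]

noncomputable def cv (f g : C →ₗ[R] A) : C →ₗ[R] A :=
  LinearMap.mul' R A ∘ₗ TensorProduct.map f g ∘ₗ Coalgebra.comul

noncomputable def cone (A : Type) [Ring A] [Algebra R A] : C →ₗ[R] A :=
  Algebra.linearMap R A ∘ₗ Coalgebra.counit

lemma mapcl {M₁ M₂ M₃ N P : Type} [AddCommMonoid M₁] [AddCommMonoid M₂] [AddCommMonoid M₃]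
    [AddCommMonoid N] [AddCommMonoid P] [Module R M₁] [Module R M₂] [Module R M₃]
    [Module R N] [Module R P]
    (f₂ : M₂ →ₗ[R] M₃) (f₁ : M₁ →ₗ[R] M₂) (g : N →ₗ[R] P) (x : M₁ ⊗[R] N) :
    TensorProduct.map (f₂ ∘ₗ f₁) g x
      = TensorProduct.map f₂ g (TensorProduct.map f₁ LinearMap.id x) := by
  rw [← LinearMap.comp_apply, ← TensorProduct.map_comp, LinearMap.comp_id]

lemma mapcr {M N₁ N₂ N₃ P : Type} [AddCommMonoid M] [AddCommMonoid N₁] [AddCommMonoid N₂]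
    [AddCommMonoid N₃] [AddCommMonoid P] [Module R M] [Module R P] [Module R N₁] [Module R N₂]
    [Module R N₃]
    (f : M →ₗ[R] P) (g₂ : N₂ →ₗ[R] N₃) (g₁ : N₁ →ₗ[R] N₂) (x : M ⊗[R] N₁) :
    TensorProduct.map f (g₂ ∘ₗ g₁) x
      = TensorProduct.map f g₂ (TensorProduct.map LinearMap.id g₁ x) := by
  rw [← LinearMap.comp_apply, ← TensorProduct.map_comp, LinearMap.comp_id]

lemma mapboth {M₁ M₂ M₃ N₁ N₂ N₃ : Type} [AddCommMonoid M₁] [AddCommMonoid M₂] [AddCommMonoid M₃]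
    [AddCommMonoid N₁] [AddCommMonoid N₂] [AddCommMonoid N₃] [Module R M₁] [Module R M₂]
    [Module R M₃] [Module R N₁] [Module R N₂] [Module R N₃]
    (f₂ : M₂ →ₗ[R] M₃) (f₁ : M₁ →ₗ[R] M₂) (g₂ : N₂ →ₗ[R] N₃) (g₁ : N₁ →ₗ[R] N₂)
    (x : M₁ ⊗[R] N₁) :
    TensorProduct.map (f₂ ∘ₗ f₁) (g₂ ∘ₗ g₁) x
      = TensorProduct.map f₂ g₂ (TensorProduct.map f₁ g₁ x) := by
  rw [← LinearMap.comp_apply, ← TensorProduct.map_comp]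

lemma cv_one_left (f : C →ₗ[R] A) : cv (cone A) f = f := by
  have hr : ∀ c : C, TensorProduct.map (Coalgebra.counit : C →ₗ[R] R) LinearMap.id
      (Coalgebra.comul c) = (1 : R) ⊗ₜ[R] c := by
    intro c
    simpa [LinearMap.rTensor] using Coalgebra.rTensor_counit_comul (R := R) c
  apply LinearMap.ext; intro c
  simp only [cv, cone, LinearMap.comp_apply, mapcl, hr]
  simp

lemma cv_one_right (f : C →ₗ[R] A) : cv f (cone A) = f := by
  have hl : ∀ c : C, TensorProduct.map (LinearMap.id : C →ₗ[R] C)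
      (Coalgebra.counit : C →ₗ[R] R) (Coalgebra.comul c) = c ⊗ₜ[R] (1 : R) := by
    intro c
    simpa [LinearMap.lTensor] using Coalgebra.lTensor_counit_comul (R := R) c
  apply LinearMap.ext; intro c
  simp only [cv, cone, LinearMap.comp_apply, mapcr, hl]
  simp

lemma cv_assoc (f g h : C →ₗ[R] A) : cv (cv f g) h = cv f (cv g h) := by
  have T : (LinearMap.mul' R A) ∘ₗ TensorProduct.map (LinearMap.mul' R A) h ∘ₗ
      TensorProduct.map (TensorProduct.map f g) (LinearMap.id : C →ₗ[R] C) ∘ₗ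
      (TensorProduct.assoc R C C C).symm.toLinearMap
      = (LinearMap.mul' R A) ∘ₗ TensorProduct.map f (LinearMap.mul' R A) ∘ₗ
        TensorProduct.map (LinearMap.id : C →ₗ[R] C) (TensorProduct.map g h) := by
    ext c c' c''
    simp [mul_assoc]
  have T' := LinearMap.congr_fun T
  simp only [LinearMap.comp_apply, LinearEquiv.coe_coe] at T'
  have coas := LinearMap.congr_fun (Coalgebra.coassoc_symm (R := R) (A := C))
  simp only [LinearMap.comp_apply, LinearMap.rTensor, LinearMap.lTensor,
    LinearEquiv.coe_coe] at coas
  apply LinearMap.ext; intro c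
  simp only [cv, LinearMap.comp_apply, mapcl, mapcr, TensorProduct.map_id, LinearMap.id_apply]
  rw [← coas c]
  exact T' _

lemma cv_alghom (α : A →ₐ[R] B) (f g : C →ₗ[R] A) :
    α.toLinearMap ∘ₗ cv f g = cv (α.toLinearMap ∘ₗ f) (α.toLinearMap ∘ₗ g) := by
  have T : α.toLinearMap ∘ₗ LinearMap.mul' R A
      = LinearMap.mul' R B ∘ₗ TensorProduct.map α.toLinearMap α.toLinearMap := by
    ext a b; simp
  have T' := LinearMap.congr_fun T
  simp only [LinearMap.comp_apply] at T'
  apply LinearMap.ext; intro c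
  simp only [cv, LinearMap.comp_apply, mapboth]
  exact T' _

lemma cv_alghom_one (α : A →ₐ[R] B) : α.toLinearMap ∘ₗ (cone A : C →ₗ[R] A) = cone B := by
  apply LinearMap.ext; intro c
  simp [cone]

lemma cv_inv_unique {a x y : C →ₗ[R] A} (h1 : cv x a = cone A) (h2 : cv a y = cone A) :
    x = y := by
  calc x = cv x (cone A) := (cv_one_right x).symm
    _ = cv x (cv a y) := by rw [h2]
    _ = cv (cv x a) y := (cv_assoc x a y).symm
    _ = cv (cone A) y := by rw [h1]
    _ = y := cv_one_left y

end ConvGen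

section Hopf
variable {R H : Type} [CommRing R] [Ring H] [HopfAlgebra R H]

lemma antipode_law_applied (a : H) :
    LinearMap.mul' R H (TensorProduct.map (HopfAlgebra.antipode (R := R)) LinearMap.id
      (Coalgebra.comul a)) = Algebra.linearMap R H (Coalgebra.counit a) := by
  have := LinearMap.congr_fun (HopfAlgebra.mul_antipode_rTensor_comul (R := R) (A := H)) a
  simpa [LinearMap.rTensor] using this

lemma my_counit_antipode :
    (Coalgebra.counit : H →ₗ[R] R) ∘ₗ (HopfAlgebra.antipode (R := R)) = Coalgebra.counit := by
  have hcone : (cone R : H →ₗ[R] R) = Coalgebra.counit := by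
    apply LinearMap.ext; intro a; simp [cone]
  have h1 : cv ((Coalgebra.counit : H →ₗ[R] R) ∘ₗ (HopfAlgebra.antipode (R := R)))
      (Coalgebra.counit : H →ₗ[R] R) = Coalgebra.counit := by
    apply LinearMap.ext; intro a
    have T : (Coalgebra.counit : H →ₗ[R] R) ∘ₗ LinearMap.mul' R H
        = LinearMap.mul' R R ∘ₗ TensorProduct.map Coalgebra.counit Coalgebra.counit := by
      ext x y; simp
    have T' := LinearMap.congr_fun T
    simp only [LinearMap.comp_apply] at T'
    have h2 := congrArg (Coalgebra.counit (R := R)) (antipode_law_applied (R := R) a)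
    simp only [cv, LinearMap.comp_apply, mapcl]
    rw [← T', h2]
    simp
  calc (Coalgebra.counit : H →ₗ[R] R) ∘ₗ (HopfAlgebra.antipode (R := R))
      = cv ((Coalgebra.counit : H →ₗ[R] R) ∘ₗ (HopfAlgebra.antipode (R := R))) (cone R) :=
        (cv_one_right _).symm
    _ = Coalgebra.counit := by rw [hcone, h1]

end Hopf

section Act
variable {R C H : Type} [CommRing R] [AddCommGroup C] [Module R C] [Coalgebra R C]
  [Ring H] [HopfAlgebra R H]

noncomputable def sigma' : (C ⊗[R] H) ⊗[R] H →ₗ[R] C ⊗[R] H :=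
  (TensorProduct.map LinearMap.id (LinearMap.mul' R H)) ∘ₗ (TensorProduct.assoc R C H H).toLinearMap

noncomputable def tau' : H ⊗[R] (C ⊗[R] H) →ₗ[R] C ⊗[R] H :=
  (TensorProduct.map LinearMap.id (LinearMap.mul' R H)) ∘ₗ
    (TensorProduct.assoc R C H H).toLinearMap ∘ₗ
    (TensorProduct.map (TensorProduct.comm R H C).toLinearMap LinearMap.id) ∘ₗ
    (TensorProduct.assoc R H C H).symm.toLinearMap

@[simp] lemma sigma'_tmul (c : C) (h k : H) :
    (sigma' : (C ⊗[R] H) ⊗[R] H →ₗ[R] C ⊗[R] H) ((c ⊗ₜ h) ⊗ₜ k) = c ⊗ₜ (h * k) := by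
  simp [sigma']

@[simp] lemma tau'_tmul (c : C) (h k : H) :
    (tau' : H ⊗[R] (C ⊗[R] H) →ₗ[R] C ⊗[R] H) (h ⊗ₜ (c ⊗ₜ k)) = c ⊗ₜ (h * k) := by
  simp [tau']

lemma B1m (m : C ⊗[R] H) (a b : H) :
    sigma' (sigma' (m ⊗ₜ a) ⊗ₜ b) = sigma' (m ⊗ₜ (a * b)) := by
  induction m using TensorProduct.induction_on with
  | zero => simp
  | tmul c h => simp [mul_assoc]
  | add x y hx hy =>
      simp only [TensorProduct.add_tmul, map_add] at *
      rw [hx, hy]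

lemma B2m (m : C ⊗[R] H) (a b : H) :
    tau' (a ⊗ₜ tau' (b ⊗ₜ m)) = tau' ((a * b) ⊗ₜ m) := by
  induction m using TensorProduct.induction_on with
  | zero => simp
  | tmul c h => simp [mul_assoc]
  | add x y hx hy =>
      simp only [TensorProduct.tmul_add, map_add] at *
      rw [hx, hy]

lemma B3m (m : C ⊗[R] H) (a b : H) :
    tau' (a ⊗ₜ sigma' (m ⊗ₜ b)) = sigma' (tau' (a ⊗ₜ m) ⊗ₜ b) := by
  induction m using TensorProduct.induction_on with
  | zero => simp
  | tmul c h => simp [mul_assoc]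
  | add x y hx hy =>
      simp only [TensorProduct.tmul_add, TensorProduct.add_tmul, map_add] at *
      rw [hx, hy]

lemma B4m (m : C ⊗[R] H) : sigma' (m ⊗ₜ (1 : H)) = m := by
  induction m using TensorProduct.induction_on with
  | zero => simp
  | tmul c h => simp
  | add x y hx hy => simp only [TensorProduct.add_tmul, map_add] at *; rw [hx, hy]

lemma B5m (m : C ⊗[R] H) : tau' ((1 : H) ⊗ₜ m) = m := by
  induction m using TensorProduct.induction_on with
  | zero => simp
  | tmul c h => simp
  | add x y hx hy => simp only [TensorProduct.tmul_add, map_add] at *; rw [hx, hy]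

noncomputable def actR (F : C →ₗ[R] C ⊗[R] H) (g : C →ₗ[R] H) : C →ₗ[R] C ⊗[R] H :=
  sigma' ∘ₗ TensorProduct.map F g ∘ₗ Coalgebra.comul

noncomputable def actL (g : C →ₗ[R] H) (F : C →ₗ[R] C ⊗[R] H) : C →ₗ[R] C ⊗[R] H :=
  tau' ∘ₗ TensorProduct.map g F ∘ₗ Coalgebra.comul

lemma actR_one (F : C →ₗ[R] C ⊗[R] H) : actR F (cone H) = F := by
  have hl : ∀ c : C, TensorProduct.map (LinearMap.id : C →ₗ[R] C)
      (Coalgebra.counit : C →ₗ[R] R) (Coalgebra.comul c) = c ⊗ₜ[R] (1 : R) := by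
    intro c
    simpa [LinearMap.lTensor] using Coalgebra.lTensor_counit_comul (R := R) c
  apply LinearMap.ext; intro c
  simp only [actR, cone, LinearMap.comp_apply, mapcr, hl]
  simp [B4m]

lemma actL_one (F : C →ₗ[R] C ⊗[R] H) : actL (cone H) F = F := by
  have hr : ∀ c : C, TensorProduct.map (Coalgebra.counit : C →ₗ[R] R) LinearMap.id
      (Coalgebra.comul c) = (1 : R) ⊗ₜ[R] c := by
    intro c
    simpa [LinearMap.rTensor] using Coalgebra.rTensor_counit_comul (R := R) c
  apply LinearMap.ext; intro c
  simp only [actL, cone, LinearMap.comp_apply, mapcl, hr]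
  simp [B5m]

lemma actR_actR (F : C →ₗ[R] C ⊗[R] H) (f g : C →ₗ[R] H) :
    actR (actR F f) g = actR F (cv f g) := by
  have T : (sigma' : (C ⊗[R] H) ⊗[R] H →ₗ[R] C ⊗[R] H) ∘ₗ
      TensorProduct.map sigma' g ∘ₗ
      TensorProduct.map (TensorProduct.map F f) (LinearMap.id : C →ₗ[R] C) ∘ₗ
      (TensorProduct.assoc R C C C).symm.toLinearMap
      = sigma' ∘ₗ TensorProduct.map F (LinearMap.mul' R H) ∘ₗ
        TensorProduct.map (LinearMap.id : C →ₗ[R] C) (TensorProduct.map f g) := by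
    ext c c' c''
    simp [B1m]
  have T' := LinearMap.congr_fun T
  simp only [LinearMap.comp_apply, LinearEquiv.coe_coe] at T'
  have coas := LinearMap.congr_fun (Coalgebra.coassoc_symm (R := R) (A := C))
  simp only [LinearMap.comp_apply, LinearMap.rTensor, LinearMap.lTensor,
    LinearEquiv.coe_coe] at coas
  apply LinearMap.ext; intro c
  simp only [actR, cv, LinearMap.comp_apply, mapcl, mapcr, TensorProduct.map_id,
    LinearMap.id_apply]
  rw [← coas c]
  exact T' _

lemma actL_actL (F : C →ₗ[R] C ⊗[R] H) (f g : C →ₗ[R] H) :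
    actL (cv f g) F = actL f (actL g F) := by
  have T : (tau' : H ⊗[R] (C ⊗[R] H) →ₗ[R] C ⊗[R] H) ∘ₗ
      TensorProduct.map (LinearMap.mul' R H) F ∘ₗ
      TensorProduct.map (TensorProduct.map f g) (LinearMap.id : C →ₗ[R] C) ∘ₗ
      (TensorProduct.assoc R C C C).symm.toLinearMap
      = tau' ∘ₗ TensorProduct.map f tau' ∘ₗ
        TensorProduct.map (LinearMap.id : C →ₗ[R] C) (TensorProduct.map g F) := by
    ext c c' c''
    simp [B2m]
  have T' := LinearMap.congr_fun T
  simp only [LinearMap.comp_apply, LinearEquiv.coe_coe] at T'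
  have coas := LinearMap.congr_fun (Coalgebra.coassoc_symm (R := R) (A := C))
  simp only [LinearMap.comp_apply, LinearMap.rTensor, LinearMap.lTensor,
    LinearEquiv.coe_coe] at coas
  apply LinearMap.ext; intro c
  simp only [actL, cv, LinearMap.comp_apply, mapcl, mapcr, TensorProduct.map_id,
    LinearMap.id_apply]
  rw [← coas c]
  exact T' _

lemma actL_actR (F : C →ₗ[R] C ⊗[R] H) (g h : C →ₗ[R] H) :
    actL g (actR F h) = actR (actL g F) h := by
  have T : (tau' : H ⊗[R] (C ⊗[R] H) →ₗ[R] C ⊗[R] H) ∘ₗ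
      TensorProduct.map g sigma' ∘ₗ
      TensorProduct.map (LinearMap.id : C →ₗ[R] C) (TensorProduct.map F h)
      = sigma' ∘ₗ TensorProduct.map tau' h ∘ₗ
        TensorProduct.map (TensorProduct.map g F) (LinearMap.id : C →ₗ[R] C) ∘ₗ
        (TensorProduct.assoc R C C C).symm.toLinearMap := by
    ext c c' c''
    simp [B3m]
  have T' := LinearMap.congr_fun T
  simp only [LinearMap.comp_apply, LinearEquiv.coe_coe] at T'
  have coas := LinearMap.congr_fun (Coalgebra.coassoc_symm (R := R) (A := C))
  simp only [LinearMap.comp_apply, LinearMap.rTensor, LinearMap.lTensor,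
    LinearEquiv.coe_coe] at coas
  apply LinearMap.ext; intro c
  simp only [actL, actR, LinearMap.comp_apply, mapcl, mapcr, TensorProduct.map_id,
    LinearMap.id_apply]
  rw [← coas c]
  exact T' _

end Act


section MapSplit
lemma map_split {R M N P Q : Type} [CommRing R] [AddCommMonoid M] [AddCommMonoid N]
    [AddCommMonoid P] [AddCommMonoid Q] [Module R M] [Module R N] [Module R P] [Module R Q]
    (f : M →ₗ[R] P) (g : N →ₗ[R] Q) (x : M ⊗[R] N) :
    TensorProduct.map f g x = TensorProduct.map f LinearMap.id
      (TensorProduct.map LinearMap.id g x) := by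
  rw [← LinearMap.comp_apply, ← TensorProduct.map_comp, LinearMap.comp_id, LinearMap.id_comp]

lemma map_split' {R M N P Q : Type} [CommRing R] [AddCommMonoid M] [AddCommMonoid N]
    [AddCommMonoid P] [AddCommMonoid Q] [Module R M] [Module R N] [Module R P] [Module R Q]
    (f : M →ₗ[R] P) (g : N →ₗ[R] Q) (x : M ⊗[R] N) :
    TensorProduct.map f g x = TensorProduct.map LinearMap.id g
      (TensorProduct.map f LinearMap.id x) := by
  rw [← LinearMap.comp_apply, ← TensorProduct.map_comp, LinearMap.comp_id, LinearMap.id_comp]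

end MapSplit


section Delta
variable {R C H : Type} [CommRing R] [AddCommGroup C] [Module R C] [Coalgebra R C]
  [Ring H] [HopfAlgebra R H]
variable (δ : C →ₗ[R] C ⊗[R] H)

/-- `ρ(g) = (g ⊗ id) ∘ δ`. -/
noncomputable def rho (g : C →ₗ[R] H) : C →ₗ[R] H ⊗[R] H :=
  TensorProduct.map g LinearMap.id ∘ₗ δ

/-- `ι₂(g) = (1 ⊗ ·) ∘ g`. -/
noncomputable def iota (g : C →ₗ[R] H) : C →ₗ[R] H ⊗[R] H :=
  (Algebra.TensorProduct.includeRight : H →ₐ[R] H ⊗[R] H).toLinearMap ∘ₗ g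

/-- `f(c) = ε(c⁽⁰⁾) c⁽¹⁾`. -/
noncomputable def fmap : C →ₗ[R] H :=
  (TensorProduct.lid R H).toLinearMap ∘ₗ
    TensorProduct.map (Coalgebra.counit : C →ₗ[R] R) LinearMap.id ∘ₗ δ

variable (hδ : IsCoflatCoaction R C H δ)
include hδ

lemma counit_fmap : (Coalgebra.counit : H →ₗ[R] R) ∘ₗ fmap δ = Coalgebra.counit := by
  have hcu := LinearMap.congr_fun hδ.coflat_counit
  simp only [LinearMap.comp_apply] at hcu
  have T : (Coalgebra.counit : H →ₗ[R] R) ∘ₗ (TensorProduct.lid R H).toLinearMap ∘ₗ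
      TensorProduct.map (Coalgebra.counit : C →ₗ[R] R) LinearMap.id
      = LinearMap.mul' R R ∘ₗ
        TensorProduct.map (Coalgebra.counit : C →ₗ[R] R) (Coalgebra.counit : H →ₗ[R] R) := by
    ext c h
    simp [mul_comm]
  have T' := LinearMap.congr_fun T
  simp only [LinearMap.comp_apply, LinearEquiv.coe_coe] at T'
  apply LinearMap.ext; intro c
  simp only [fmap, LinearMap.comp_apply, LinearEquiv.coe_coe]
  rw [T', hcu]

lemma comul_fmap :
    (Coalgebra.comul (R := R)) ∘ₗ fmap δ = rho δ (fmap δ) := by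
  have hcoas := LinearMap.congr_fun hδ.coassoc
  simp only [LinearMap.comp_apply, LinearEquiv.coe_coe] at hcoas
  have T1 : (Coalgebra.comul (R := R) (A := H)) ∘ₗ (TensorProduct.lid R H).toLinearMap ∘ₗ
      TensorProduct.map (Coalgebra.counit : C →ₗ[R] R) LinearMap.id
      = (TensorProduct.lid R (H ⊗[R] H)).toLinearMap ∘ₗ
        TensorProduct.map (Coalgebra.counit : C →ₗ[R] R) LinearMap.id ∘ₗ
        TensorProduct.map (LinearMap.id : C →ₗ[R] C) (Coalgebra.comul (R := R)) := by
    ext c h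
    simp
  have T1' := LinearMap.congr_fun T1
  simp only [LinearMap.comp_apply, LinearEquiv.coe_coe] at T1'
  have T2 : (TensorProduct.lid R (H ⊗[R] H)).toLinearMap ∘ₗ
      TensorProduct.map (Coalgebra.counit : C →ₗ[R] R) LinearMap.id ∘ₗ
      (TensorProduct.assoc R C H H).toLinearMap
      = TensorProduct.map ((TensorProduct.lid R H).toLinearMap ∘ₗ
          TensorProduct.map (Coalgebra.counit : C →ₗ[R] R) LinearMap.id) LinearMap.id := by
    ext c h h'
    simp [TensorProduct.smul_tmul']
  have T2' := LinearMap.congr_fun T2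
  simp only [LinearMap.comp_apply, LinearEquiv.coe_coe] at T2'
  apply LinearMap.ext; intro c
  simp only [fmap, rho, LinearMap.comp_apply, LinearEquiv.coe_coe, mapcl]
  rw [T1' (δ c), ← hcoas c, T2' _, mapcl]

lemma G_eq_one : (LinearMap.mul' R H) ∘ₗ
    TensorProduct.map ((HopfAlgebra.antipode (R := R)) ∘ₗ fmap δ) LinearMap.id ∘ₗ δ
    = cone H := by
  have cf := LinearMap.congr_fun (comul_fmap δ hδ)
  simp only [rho, LinearMap.comp_apply] at cf
  have cu := LinearMap.congr_fun (counit_fmap δ hδ)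
  simp only [LinearMap.comp_apply] at cu
  apply LinearMap.ext; intro c
  simp only [cone, LinearMap.comp_apply, mapcl]
  rw [← cf c, antipode_law_applied, cu]

lemma actR_fmap_eq : actR δ (fmap δ) = δ := by
  have hcm := LinearMap.congr_fun hδ.coflat_mul
  simp only [LinearMap.comp_apply, LinearEquiv.coe_coe] at hcm
  have hl : ∀ c : C, TensorProduct.map (LinearMap.id : C →ₗ[R] C)
      (Coalgebra.counit : C →ₗ[R] R) (Coalgebra.comul c) = c ⊗ₜ[R] (1 : R) := by
    intro c
    simpa [LinearMap.lTensor] using Coalgebra.lTensor_counit_comul (R := R) c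
  have hf : fmap δ = ((TensorProduct.lid R H).toLinearMap ∘ₗ
      TensorProduct.map (Coalgebra.counit : C →ₗ[R] R) LinearMap.id) ∘ₗ δ := rfl
  have st1 : ∀ x : C ⊗[R] C, TensorProduct.map δ (((TensorProduct.lid R H).toLinearMap ∘ₗ
      TensorProduct.map (Coalgebra.counit : C →ₗ[R] R) LinearMap.id) ∘ₗ δ) x
      = TensorProduct.map LinearMap.id ((TensorProduct.lid R H).toLinearMap ∘ₗ
          TensorProduct.map (Coalgebra.counit : C →ₗ[R] R) LinearMap.id)
        (TensorProduct.map δ δ x) := by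
    intro x
    rw [← LinearMap.comp_apply, ← TensorProduct.map_comp, LinearMap.id_comp]
  have K4T : (sigma' : (C ⊗[R] H) ⊗[R] H →ₗ[R] C ⊗[R] H) ∘ₗ
      TensorProduct.map LinearMap.id ((TensorProduct.lid R H).toLinearMap ∘ₗ
        TensorProduct.map (Coalgebra.counit : C →ₗ[R] R) LinearMap.id)
      = (TensorProduct.map ((TensorProduct.rid R C).toLinearMap ∘ₗ
          TensorProduct.map LinearMap.id (Coalgebra.counit : C →ₗ[R] R)) LinearMap.id) ∘ₗ
        TensorProduct.map LinearMap.id (LinearMap.mul' R H) ∘ₗ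
        (TensorProduct.tensorTensorTensorComm R C H C H).toLinearMap := by
    ext c h c' h'
    simp [sigma', mul_smul_comm, TensorProduct.smul_tmul']
  have K4T' := LinearMap.congr_fun K4T
  simp only [LinearMap.comp_apply, LinearEquiv.coe_coe] at K4T'
  have K4T2 : (TensorProduct.map ((TensorProduct.rid R C).toLinearMap ∘ₗ
      TensorProduct.map LinearMap.id (Coalgebra.counit : C →ₗ[R] R)) LinearMap.id) ∘ₗ
      TensorProduct.map (Coalgebra.comul (R := R) (A := C)) LinearMap.id
      = (LinearMap.id : C ⊗[R] H →ₗ[R] C ⊗[R] H) := by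
    ext c h
    simp [mapcl, hl]
  have K4T2' := LinearMap.congr_fun K4T2
  simp only [LinearMap.comp_apply, LinearMap.id_apply] at K4T2'
  apply LinearMap.ext; intro c
  simp only [actR, LinearMap.comp_apply]
  rw [hf, st1 _, K4T' _, hcm c, K4T2' _]

lemma fmap_eq_one : fmap δ = cone H := by
  have K6 : cv ((LinearMap.mul' R H) ∘ₗ
      TensorProduct.map ((HopfAlgebra.antipode (R := R)) ∘ₗ fmap δ) LinearMap.id ∘ₗ δ) (fmap δ)
      = (LinearMap.mul' R H) ∘ₗ
        TensorProduct.map ((HopfAlgebra.antipode (R := R)) ∘ₗ fmap δ) LinearMap.id ∘ₗ δ := by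
    have st2 : ∀ x : C ⊗[R] C, TensorProduct.map (((LinearMap.mul' R H) ∘ₗ
        TensorProduct.map ((HopfAlgebra.antipode (R := R)) ∘ₗ fmap δ) LinearMap.id) ∘ₗ δ)
        (fmap δ) x
        = TensorProduct.map ((LinearMap.mul' R H) ∘ₗ
            TensorProduct.map ((HopfAlgebra.antipode (R := R)) ∘ₗ fmap δ) LinearMap.id)
          LinearMap.id (TensorProduct.map δ (fmap δ) x) := by
      intro x
      rw [← LinearMap.comp_apply, ← TensorProduct.map_comp, LinearMap.id_comp]
    have K6T : (LinearMap.mul' R H) ∘ₗ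
        TensorProduct.map ((LinearMap.mul' R H) ∘ₗ
          TensorProduct.map ((HopfAlgebra.antipode (R := R)) ∘ₗ fmap δ) LinearMap.id)
          LinearMap.id
        = ((LinearMap.mul' R H) ∘ₗ
            TensorProduct.map ((HopfAlgebra.antipode (R := R)) ∘ₗ fmap δ) LinearMap.id) ∘ₗ
          (sigma' : (C ⊗[R] H) ⊗[R] H →ₗ[R] C ⊗[R] H) := by
      ext c h h'
      simp [sigma', mul_assoc]
    have K6T' := LinearMap.congr_fun K6T
    simp only [LinearMap.comp_apply] at K6T'
    have K4 := LinearMap.congr_fun (actR_fmap_eq δ hδ)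
    simp only [actR, LinearMap.comp_apply] at K4
    apply LinearMap.ext; intro c
    simp only [cv, LinearMap.comp_apply]
    rw [show (LinearMap.mul' R H) ∘ₗ
        TensorProduct.map ((HopfAlgebra.antipode (R := R)) ∘ₗ fmap δ) LinearMap.id ∘ₗ δ
        = ((LinearMap.mul' R H) ∘ₗ
          TensorProduct.map ((HopfAlgebra.antipode (R := R)) ∘ₗ fmap δ) LinearMap.id) ∘ₗ δ
      from rfl, st2 _, K6T' _, K4 c]
  have h3 := G_eq_one δ hδ
  calc fmap δ = cv (cone H) (fmap δ) := (cv_one_left _).symm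
    _ = cv ((LinearMap.mul' R H) ∘ₗ
        TensorProduct.map ((HopfAlgebra.antipode (R := R)) ∘ₗ fmap δ) LinearMap.id ∘ₗ δ)
        (fmap δ) := by rw [h3]
    _ = (LinearMap.mul' R H) ∘ₗ
        TensorProduct.map ((HopfAlgebra.antipode (R := R)) ∘ₗ fmap δ) LinearMap.id ∘ₗ δ := K6
    _ = cone H := h3

lemma rho_one : rho δ (cone H) = cone (H ⊗[R] H) := by
  have T : TensorProduct.map ((Algebra.linearMap R H) ∘ₗ (Coalgebra.counit : C →ₗ[R] R))
      (LinearMap.id : H →ₗ[R] H)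
      = (Algebra.TensorProduct.includeRight : H →ₐ[R] H ⊗[R] H).toLinearMap ∘ₗ
        (TensorProduct.lid R H).toLinearMap ∘ₗ
        TensorProduct.map (Coalgebra.counit : C →ₗ[R] R) LinearMap.id := by
    ext c h
    simp [Algebra.algebraMap_eq_smul_one, TensorProduct.smul_tmul]
  have T' := LinearMap.congr_fun T
  simp only [LinearMap.comp_apply, LinearEquiv.coe_coe] at T'
  have hK5 := LinearMap.congr_fun (fmap_eq_one δ hδ)
  simp only [fmap, cone, LinearMap.comp_apply, LinearEquiv.coe_coe] at hK5
  apply LinearMap.ext; intro c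
  simp only [rho, cone, LinearMap.comp_apply]
  rw [T' _, hK5 c]
  simp [cone]
  rw [Algebra.algebraMap_eq_smul_one, TensorProduct.smul_tmul]

lemma rho_mul (f g : C →ₗ[R] H) : cv (rho δ f) (rho δ g) = rho δ (cv f g) := by
  have hcm := LinearMap.congr_fun hδ.coflat_mul
  simp only [LinearMap.comp_apply, LinearEquiv.coe_coe] at hcm
  have K8T : (LinearMap.mul' R (H ⊗[R] H)) ∘ₗ
      TensorProduct.map (TensorProduct.map f LinearMap.id) (TensorProduct.map g LinearMap.id)
      = TensorProduct.map ((LinearMap.mul' R H) ∘ₗ TensorProduct.map f g) (LinearMap.mul' R H)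
        ∘ₗ (TensorProduct.tensorTensorTensorComm R C H C H).toLinearMap := by
    ext c h c' h'
    simp [Algebra.TensorProduct.tmul_mul_tmul]
  have K8T' := LinearMap.congr_fun K8T
  simp only [LinearMap.comp_apply, LinearEquiv.coe_coe] at K8T'
  apply LinearMap.ext; intro c
  simp only [cv, rho, LinearMap.comp_apply]
  rw [mapboth, K8T' _,
    map_split ((LinearMap.mul' R H) ∘ₗ TensorProduct.map f g) (LinearMap.mul' R H), hcm c]
  simp only [mapcl]

omit hδ in
lemma L6a (f g : C →ₗ[R] H) :
    cv (rho δ f) (iota g) = (TensorProduct.map f LinearMap.id) ∘ₗ actR δ g := by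
  have T : (LinearMap.mul' R (H ⊗[R] H)) ∘ₗ
      TensorProduct.map (TensorProduct.map f LinearMap.id)
        (Algebra.TensorProduct.includeRight : H →ₐ[R] H ⊗[R] H).toLinearMap
      = TensorProduct.map f LinearMap.id ∘ₗ (sigma' : (C ⊗[R] H) ⊗[R] H →ₗ[R] C ⊗[R] H) := by
    ext c h h'
    simp [sigma', Algebra.TensorProduct.tmul_mul_tmul]
  have T' := LinearMap.congr_fun T
  simp only [LinearMap.comp_apply] at T'
  apply LinearMap.ext; intro c
  simp only [cv, rho, iota, actR, LinearMap.comp_apply]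
  rw [mapboth, T' _]

omit hδ in
lemma L6b (f g : C →ₗ[R] H) :
    cv (iota g) (rho δ f) = (TensorProduct.map f LinearMap.id) ∘ₗ actL g δ := by
  have T : (LinearMap.mul' R (H ⊗[R] H)) ∘ₗ
      TensorProduct.map (Algebra.TensorProduct.includeRight : H →ₐ[R] H ⊗[R] H).toLinearMap
        (TensorProduct.map f LinearMap.id)
      = TensorProduct.map f LinearMap.id ∘ₗ (tau' : H ⊗[R] (C ⊗[R] H) →ₗ[R] C ⊗[R] H) := by
    ext h c h'
    simp [tau', Algebra.TensorProduct.tmul_mul_tmul]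
  have T' := LinearMap.congr_fun T
  simp only [LinearMap.comp_apply] at T'
  apply LinearMap.ext; intro c
  simp only [cv, rho, iota, actL, LinearMap.comp_apply]
  rw [mapboth, T' _]

omit hδ in
lemma rho_iota_comm (f g : C →ₗ[R] H) (hC2 : actR δ g = actL g δ) :
    cv (rho δ f) (iota g) = cv (iota g) (rho δ f) := by
  rw [L6a, L6b, hC2]

omit hδ in
lemma coactTerm_eq (φ ψ : C →ₗ[R] H) :
    coactTerm R C H δ φ ψ = cv (rho δ φ) (iota ψ) := by
  have K9T : TensorProduct.map LinearMap.id (LinearMap.mul' R H) ∘ₗ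
      (TensorProduct.assoc R H H H).toLinearMap ∘ₗ
      TensorProduct.map (TensorProduct.map φ LinearMap.id) LinearMap.id
      = (LinearMap.mul' R (H ⊗[R] H)) ∘ₗ
        TensorProduct.map (TensorProduct.map φ LinearMap.id)
          (Algebra.TensorProduct.includeRight : H →ₐ[R] H ⊗[R] H).toLinearMap := by
    ext c h h'
    simp [Algebra.TensorProduct.tmul_mul_tmul]
  have K9T' := LinearMap.congr_fun K9T
  simp only [LinearMap.comp_apply, LinearEquiv.coe_coe] at K9T'
  apply LinearMap.ext; intro c
  simp only [coactTerm, cv, rho, iota, LinearMap.comp_apply, LinearEquiv.coe_coe]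
  rw [mapboth, ← K9T' _, map_split (TensorProduct.map φ LinearMap.id) ψ, ← map_split' δ ψ]

omit hδ in
lemma iota_cv (f g : C →ₗ[R] H) : cv (iota f) (iota g) = iota (cv f g) := by
  have h := cv_alghom (Algebra.TensorProduct.includeRight : H →ₐ[R] H ⊗[R] H) f g
  simp only [iota]
  exact h.symm

omit hδ in
lemma iota_one' : iota (cone H) = (cone (H ⊗[R] H) : C →ₗ[R] H ⊗[R] H) := by
  have h := cv_alghom_one (C := C) (Algebra.TensorProduct.includeRight : H →ₐ[R] H ⊗[R] H)
  simp only [iota]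
  exact h

omit hδ in
lemma comul_cv (f g : C →ₗ[R] H) : (Coalgebra.comul (R := R)) ∘ₗ cv f g
    = cv ((Coalgebra.comul (R := R) (A := H)) ∘ₗ f) ((Coalgebra.comul (R := R)) ∘ₗ g) := by
  have e : (Bialgebra.comulAlgHom R H).toLinearMap = (Coalgebra.comul (R := R) (A := H)) := rfl
  have h := cv_alghom (Bialgebra.comulAlgHom R H) f g
  rw [e] at h
  exact h

omit hδ in
lemma comul_cone : (Coalgebra.comul (R := R) (A := H)) ∘ₗ (cone H : C →ₗ[R] H)
    = cone (H ⊗[R] H) := by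
  have e : (Bialgebra.comulAlgHom R H).toLinearMap = (Coalgebra.comul (R := R) (A := H)) := rfl
  have h := cv_alghom_one (C := C) (Bialgebra.comulAlgHom R H)
  rw [e] at h
  exact h

omit hδ in
lemma counit_cv (f g : C →ₗ[R] H) (hf : (Coalgebra.counit : H →ₗ[R] R) ∘ₗ f = Coalgebra.counit)
    (hg : (Coalgebra.counit : H →ₗ[R] R) ∘ₗ g = Coalgebra.counit) :
    (Coalgebra.counit : H →ₗ[R] R) ∘ₗ cv f g = Coalgebra.counit := by
  have T : (Coalgebra.counit : H →ₗ[R] R) ∘ₗ LinearMap.mul' R H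
      = LinearMap.mul' R R ∘ₗ TensorProduct.map Coalgebra.counit Coalgebra.counit := by
    ext x y; simp
  have T' := LinearMap.congr_fun T
  simp only [LinearMap.comp_apply] at T'
  have hr : ∀ c : C, TensorProduct.map (Coalgebra.counit : C →ₗ[R] R) LinearMap.id
      (Coalgebra.comul c) = (1 : R) ⊗ₜ[R] c := by
    intro c
    simpa [LinearMap.rTensor] using Coalgebra.rTensor_counit_comul (R := R) c
  apply LinearMap.ext; intro c
  simp only [cv, LinearMap.comp_apply]
  rw [T' _, ← mapboth, hf, hg, map_split', hr c]
  simp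

lemma counit_inv (φ : C →ₗ[R] H)
    (hφc : (Coalgebra.counit : H →ₗ[R] R) ∘ₗ φ = Coalgebra.counit) :
    (Coalgebra.counit : H →ₗ[R] R) ∘ₗ ((LinearMap.mul' R H) ∘ₗ
      TensorProduct.map ((HopfAlgebra.antipode (R := R)) ∘ₗ φ) LinearMap.id ∘ₗ δ)
      = Coalgebra.counit := by
  have T : (Coalgebra.counit : H →ₗ[R] R) ∘ₗ LinearMap.mul' R H
      = LinearMap.mul' R R ∘ₗ TensorProduct.map Coalgebra.counit Coalgebra.counit := by
    ext x y; simp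
  have T' := LinearMap.congr_fun T
  simp only [LinearMap.comp_apply] at T'
  have hx : (Coalgebra.counit : H →ₗ[R] R) ∘ₗ ((HopfAlgebra.antipode (R := R)) ∘ₗ φ)
      = (Coalgebra.counit : C →ₗ[R] R) := by
    rw [← LinearMap.comp_assoc, my_counit_antipode, hφc]
  have hcu := LinearMap.congr_fun hδ.coflat_counit
  simp only [LinearMap.comp_apply] at hcu
  apply LinearMap.ext; intro c
  simp only [LinearMap.comp_apply]
  rw [T' _, ← mapboth, hx, LinearMap.comp_id, hcu c]

omit hδ in
lemma inv_left (φ : C →ₗ[R] H)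
    (hco : (Coalgebra.comul (R := R)) ∘ₗ φ = cv (rho δ φ) (iota φ))
    (hcu : (Coalgebra.counit : H →ₗ[R] R) ∘ₗ φ = Coalgebra.counit) :
    cv ((LinearMap.mul' R H) ∘ₗ
      TensorProduct.map ((HopfAlgebra.antipode (R := R)) ∘ₗ φ) LinearMap.id ∘ₗ δ) φ
      = cone H := by
  have hco' := LinearMap.congr_fun hco
  simp only [cv, rho, iota, LinearMap.comp_apply] at hco'
  simp only [mapboth] at hco'
  have K11T : (LinearMap.mul' R H) ∘ₗ
      TensorProduct.map (HopfAlgebra.antipode (R := R)) LinearMap.id ∘ₗ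
      (LinearMap.mul' R (H ⊗[R] H)) ∘ₗ TensorProduct.map (TensorProduct.map φ LinearMap.id)
        (Algebra.TensorProduct.includeRight : H →ₐ[R] H ⊗[R] H).toLinearMap
      = (LinearMap.mul' R H) ∘ₗ TensorProduct.map ((LinearMap.mul' R H) ∘ₗ
          TensorProduct.map ((HopfAlgebra.antipode (R := R)) ∘ₗ φ) LinearMap.id)
          LinearMap.id := by
    ext c h h'
    simp [Algebra.TensorProduct.tmul_mul_tmul, mul_assoc]
  have K11T' := LinearMap.congr_fun K11T
  simp only [LinearMap.comp_apply] at K11T'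
  have st : ∀ x : C ⊗[R] C, TensorProduct.map ((LinearMap.mul' R H) ∘ₗ
      TensorProduct.map ((HopfAlgebra.antipode (R := R)) ∘ₗ φ) LinearMap.id ∘ₗ δ) φ x
      = TensorProduct.map ((LinearMap.mul' R H) ∘ₗ
          TensorProduct.map ((HopfAlgebra.antipode (R := R)) ∘ₗ φ) LinearMap.id)
        LinearMap.id (TensorProduct.map δ φ x) := by
    intro x
    rw [← LinearMap.comp_apply, ← TensorProduct.map_comp, LinearMap.id_comp,
      LinearMap.comp_assoc]
  have hcuφ := LinearMap.congr_fun hcu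
  simp only [LinearMap.comp_apply] at hcuφ
  apply LinearMap.ext; intro c
  simp only [cv, cone, LinearMap.comp_apply]
  rw [st _, ← K11T' _, ← hco' c, antipode_law_applied, hcuφ c]

omit hδ in
lemma C2_inv (φ ψ : C →ₗ[R] H) (hC2 : actR δ φ = actL φ δ)
    (h1 : cv φ ψ = cone H) (h2 : cv ψ φ = cone H) : actR δ ψ = actL ψ δ := by
  calc actR δ ψ = actL (cone H) (actR δ ψ) := (actL_one _).symm
    _ = actL (cv ψ φ) (actR δ ψ) := by rw [h2]
    _ = actL ψ (actL φ (actR δ ψ)) := actL_actL _ _ _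
    _ = actL ψ (actR (actL φ δ) ψ) := by rw [actL_actR]
    _ = actL ψ (actR (actR δ φ) ψ) := by rw [hC2]
    _ = actL ψ (actR δ (cv φ ψ)) := by rw [actR_actR]
    _ = actL ψ (actR δ (cone H)) := by rw [h1]
    _ = actL ψ δ := by rw [actR_one]

omit hδ in
lemma C2_mul (φ ψ : C →ₗ[R] H) (h1 : actR δ φ = actL φ δ) (h2 : actR δ ψ = actL ψ δ) :
    actR δ (cv φ ψ) = actL (cv φ ψ) δ := by
  rw [← actR_actR, h1, ← actL_actR, h2, actL_actL]

lemma C1_mul (φ ψ : C →ₗ[R] H)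
    (hφ : (Coalgebra.comul (R := R)) ∘ₗ φ = cv (rho δ φ) (iota φ))
    (hψ : (Coalgebra.comul (R := R)) ∘ₗ ψ = cv (rho δ ψ) (iota ψ))
    (hC2φ : actR δ φ = actL φ δ) :
    (Coalgebra.comul (R := R)) ∘ₗ cv φ ψ = cv (rho δ (cv φ ψ)) (iota (cv φ ψ)) := by
  rw [comul_cv, hφ, hψ]
  rw [cv_assoc (rho δ φ) (iota φ) (cv (rho δ ψ) (iota ψ))]
  rw [← cv_assoc (iota φ) (rho δ ψ) (iota ψ)]
  rw [← rho_iota_comm δ ψ φ hC2φ]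
  rw [cv_assoc (rho δ ψ) (iota φ) (iota ψ)]
  rw [← cv_assoc (rho δ φ) (rho δ ψ) (cv (iota φ) (iota ψ))]
  rw [rho_mul δ hδ φ ψ, iota_cv]

lemma C1_inv (φ ψ : C →ₗ[R] H)
    (hco : (Coalgebra.comul (R := R)) ∘ₗ φ = cv (rho δ φ) (iota φ))
    (h1 : cv φ ψ = cone H) (h2 : cv ψ φ = cone H)
    (hC2ψ : actR δ ψ = actL ψ δ) :
    (Coalgebra.comul (R := R)) ∘ₗ ψ = cv (rho δ ψ) (iota ψ) := by
  have e1 : cv ((Coalgebra.comul (R := R)) ∘ₗ φ) ((Coalgebra.comul (R := R)) ∘ₗ ψ)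
      = cone (H ⊗[R] H) := by
    rw [← comul_cv, h1, comul_cone]
  have e3 : cv (cv (iota ψ) (rho δ ψ)) ((Coalgebra.comul (R := R)) ∘ₗ φ)
      = cone (H ⊗[R] H) := by
    rw [hco]
    rw [cv_assoc (iota ψ) (rho δ ψ) (cv (rho δ φ) (iota φ))]
    rw [← cv_assoc (rho δ ψ) (rho δ φ) (iota φ)]
    rw [rho_mul δ hδ ψ φ, h2, rho_one δ hδ, cv_one_left, iota_cv, h2, iota_one']
  have h4 : cv (iota ψ) (rho δ ψ) = (Coalgebra.comul (R := R)) ∘ₗ ψ :=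
    cv_inv_unique e3 e1
  rw [← h4, ← rho_iota_comm δ ψ ψ hC2ψ]

end Delta
/-- the `H`-equivariant cocharacters `Γ(C ↻ H)` form a group under the
convolution product: the convolution unit is a cocharacter, cocharacters are closed
under convolution, and the inverse of a cocharacter `φ` is the cocharacter
`φ^{⋆-1}(c) = S(φ(c⁽⁰⁾)) c⁽¹⁾`. -/

theorem cocharacters_form_group (R C H : Type) [CommRing R]
    [AddCommGroup C] [Module R C] [Coalgebra R C] [Ring H] [HopfAlgebra R H]
    (δ : C →ₗ[R] C ⊗[R] H) (hδ : IsCoflatCoaction R C H δ) :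
    IsCocharacter R C H δ (convOne R C H) ∧
    (∀ φ ψ : C →ₗ[R] H, IsCocharacter R C H δ φ → IsCocharacter R C H δ ψ →
      IsCocharacter R C H δ (conv R C H φ ψ)) ∧
    (∀ φ : C →ₗ[R] H, IsCocharacter R C H δ φ →
      IsCocharacter R C H δ
        ((LinearMap.mul' R H) ∘ₗ
          (TensorProduct.map ((HopfAlgebra.antipode (R := R)) ∘ₗ φ)
            (LinearMap.id : H →ₗ[R] H)) ∘ₗ δ) ∧
      conv R C H φ
        ((LinearMap.mul' R H) ∘ₗ
          (TensorProduct.map ((HopfAlgebra.antipode (R := R)) ∘ₗ φ)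
            (LinearMap.id : H →ₗ[R] H)) ∘ₗ δ) = convOne R C H ∧
      conv R C H
        ((LinearMap.mul' R H) ∘ₗ
          (TensorProduct.map ((HopfAlgebra.antipode (R := R)) ∘ₗ φ)
            (LinearMap.id : H →ₗ[R] H)) ∘ₗ δ)
        φ = convOne R C H) := by
  have bL : ∀ φ : C →ₗ[R] H, comodCondLHS R C H δ φ = actR δ φ := fun _ => rfl
  have bR : ∀ φ : C →ₗ[R] H, comodCondRHS R C H δ φ = actL φ δ := fun _ => rfl
  have bconv : ∀ f g : C →ₗ[R] H, conv R C H f g = cv f g := fun _ _ => rfl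
  have bone : convOne R C H = cone H := rfl
  refine ⟨?_, ?_, ?_⟩
  · -- the unit is a cocharacter
    refine ⟨⟨convOne R C H, ?_, ?_⟩, ?_, ?_, ?_⟩
    · rw [bconv, bone]; exact cv_one_left _
    · rw [bconv, bone]; exact cv_one_left _
    · apply LinearMap.ext; intro c
      simp [_root_.convOne, Algebra.algebraMap_eq_smul_one]
    · rw [coactTerm_eq δ, bone, rho_one δ hδ, cv_one_left, iota_one', comul_cone]
    · rw [bL, bR, bone, actR_one, actL_one]
  · -- closure under convolution
    intro φ ψ hφ hψ
    obtain ⟨φ', hφ1, hφ2⟩ := hφ.invertible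
    obtain ⟨ψ', hψ1, hψ2⟩ := hψ.invertible
    rw [bconv, bone] at hφ1 hφ2 hψ1 hψ2
    have hφco : (Coalgebra.comul (R := R)) ∘ₗ φ = cv (rho δ φ) (iota φ) := by
      rw [hφ.coaction, coactTerm_eq]
    have hψco : (Coalgebra.comul (R := R)) ∘ₗ ψ = cv (rho δ ψ) (iota ψ) := by
      rw [hψ.coaction, coactTerm_eq]
    have hφC2 : actR δ φ = actL φ δ := by
      have := hφ.comodule; rwa [bL, bR] at this
    have hψC2 : actR δ ψ = actL ψ δ := by
      have := hψ.comodule; rwa [bL, bR] at this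
    refine ⟨⟨conv R C H ψ' φ', ?_, ?_⟩, ?_, ?_, ?_⟩
    · rw [bconv, bconv, bconv, bone]
      rw [cv_assoc φ ψ (cv ψ' φ'), ← cv_assoc ψ ψ' φ', hψ1, cv_one_left, hφ1]
    · rw [bconv, bconv, bconv, bone]
      rw [cv_assoc ψ' φ' (cv φ ψ), ← cv_assoc φ' φ ψ, hφ2, cv_one_left, hψ2]
    · rw [bconv]
      exact counit_cv φ ψ hφ.counitary hψ.counitary
    · rw [bconv, coactTerm_eq]
      exact C1_mul δ hδ φ ψ hφco hψco hφC2
    · rw [bL, bR, bconv]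
      exact C2_mul δ φ ψ hφC2 hψC2
  · -- inverses
    intro φ hφ
    obtain ⟨ψ, h1, h2⟩ := hφ.invertible
    rw [bconv, bone] at h1 h2
    have hφco : (Coalgebra.comul (R := R)) ∘ₗ φ = cv (rho δ φ) (iota φ) := by
      rw [hφ.coaction, coactTerm_eq]
    have hφC2 : actR δ φ = actL φ δ := by
      have := hφ.comodule; rwa [bL, bR] at this
    have hleft : cv ((LinearMap.mul' R H) ∘ₗ
        TensorProduct.map ((HopfAlgebra.antipode (R := R)) ∘ₗ φ) LinearMap.id ∘ₗ δ) φ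
        = cone H := inv_left δ φ hφco hφ.counitary
    have hΦψ : ((LinearMap.mul' R H) ∘ₗ
        TensorProduct.map ((HopfAlgebra.antipode (R := R)) ∘ₗ φ) LinearMap.id ∘ₗ δ) = ψ :=
      cv_inv_unique hleft h1
    have hright : cv φ ((LinearMap.mul' R H) ∘ₗ
        TensorProduct.map ((HopfAlgebra.antipode (R := R)) ∘ₗ φ) LinearMap.id ∘ₗ δ)
        = cone H := by rw [hΦψ]; exact h1
    have hC2inv : actR δ ((LinearMap.mul' R H) ∘ₗ
        TensorProduct.map ((HopfAlgebra.antipode (R := R)) ∘ₗ φ) LinearMap.id ∘ₗ δ)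
        = actL ((LinearMap.mul' R H) ∘ₗ
        TensorProduct.map ((HopfAlgebra.antipode (R := R)) ∘ₗ φ) LinearMap.id ∘ₗ δ) δ :=
      C2_inv δ φ _ hφC2 hright hleft
    refine ⟨⟨⟨φ, ?_, ?_⟩, ?_, ?_, ?_⟩, ?_, ?_⟩
    · rw [bconv, bone]; exact hleft
    · rw [bconv, bone]; exact hright
    · exact counit_inv δ hδ φ hφ.counitary
    · rw [coactTerm_eq]
      exact C1_inv δ hδ φ _ hφco hright hleft hC2inv
    · rw [bL, bR]
      exact hC2inv
    · rw [bconv, bone]; exact hright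
    · rw [bconv, bone]; exact hleft
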